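/- Let θ, z : (a,b) → ℝ be C¹ functions with z > 0 satisfying θ'(t)² + cos²θ(t)/z(t)² = 1 and z'(t) = sin θ(t) for all t ∈ (a,b). Then θ is monotone on (a,b). -/

import Mathlib

open Set Real Filter Topology

private lemma slope_right_aux {θ : ℝ → ℝ} {w u q : ℝ} (hd : HasDerivAt θ w u) (hw : 0 < w)
    (huq : u < q) : ∃ s ∈ Set.Ioo u q, θ u < θ s := by
  have h := hasDerivAt_iff_tendsto_slope.mp hd
  have hev : ∀ᶠ s in 𝓝[≠] u, 0 < slope θ u s := h.eventually (eventually_gt_nhds hw)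
  have hev' : ∀ᶠ s in 𝓝[>] u, 0 < slope θ u s :=
    hev.filter_mono (nhdsWithin_mono u fun x hx => ne_of_gt hx)
  have hmem : Set.Ioo u q ∈ 𝓝[>] u := Ioo_mem_nhdsGT_of_mem ⟨le_refl u, huq⟩
  obtain ⟨s, hs1, hs2⟩ := (hev'.and (eventually_of_mem hmem fun x hx => hx)).exists
  refine ⟨s, hs2, ?_⟩
  rw [slope_def_field] at hs1
  have h1 : 0 < s - u := sub_pos.mpr hs2.1
  rcases div_pos_iff.mp hs1 with ⟨h2, _⟩ | ⟨_, h3⟩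
  · linarith
  · linarith

private lemma slope_left_aux {θ : ℝ → ℝ} {w u p : ℝ} (hd : HasDerivAt θ w u) (hw : w < 0)
    (hpu : p < u) : ∃ s ∈ Set.Ioo p u, θ u < θ s := by
  have h := hasDerivAt_iff_tendsto_slope.mp hd
  have hev : ∀ᶠ s in 𝓝[≠] u, slope θ u s < 0 := h.eventually (eventually_lt_nhds hw)
  have hev' : ∀ᶠ s in 𝓝[<] u, slope θ u s < 0 :=
    hev.filter_mono (nhdsWithin_mono u fun x hx => ne_of_lt hx)
  have hmem : Set.Ioo p u ∈ 𝓝[<] u := Ioo_mem_nhdsLT_of_mem ⟨hpu, le_refl u⟩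
  obtain ⟨s, hs1, hs2⟩ := (hev'.and (eventually_of_mem hmem fun x hx => hx)).exists
  refine ⟨s, hs2, ?_⟩
  rw [slope_def_field] at hs1
  have h1 : s - u < 0 := sub_neg.mpr hs2.2
  rcases div_neg_iff.mp hs1 with ⟨h2, h3⟩ | ⟨h2, h3⟩
  · linarith
  · linarith

private lemma no_two_zeros_aux {x y : ℝ} (hx : Real.sin x = 0) (hy : Real.sin y = 0)
    (h1 : x < y) (h2 : y < x + π) : False := by
  obtain ⟨n, hn⟩ := Real.sin_eq_zero_iff.mp hx
  obtain ⟨m, hm⟩ := Real.sin_eq_zero_iff.mp hy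
  rw [← hn, ← hm] at h1 h2
  have hπ := Real.pi_pos
  have hnm : (n : ℝ) < m := by
    have := lt_of_mul_lt_mul_right h1 hπ.le
    exact_mod_cast this
  have hmn : (m : ℝ) < n + 1 := by
    have hh : (m : ℝ) * π < ((n : ℝ) + 1) * π := by ring_nf; ring_nf at h2; linarith
    exact lt_of_mul_lt_mul_right hh hπ.le
  have e1 : n < m := by exact_mod_cast hnm
  have e2 : m < n + 1 := by exact_mod_cast hmn
  omega

private lemma window_aux (a b : ℝ) (θ z θ' : ℝ → ℝ)
    (hθ : ∀ t ∈ Set.Ioo a b, HasDerivAt θ (θ' t) t)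
    (hθ'c : ContinuousOn θ' (Set.Ioo a b))
    (hz' : ∀ t ∈ Set.Ioo a b, HasDerivAt z (Real.sin (θ t)) t)
    (p : ℝ) (hp : p ∈ Set.Ioo a b) (h0 : θ' p = 0) (hz1 : z p = 1) :
    ∃ η > 0, ∀ s, |s - p| ≤ η →
      (0 < z s + θ' s * Real.cos (θ s) ∧ |θ s - θ p| < π / 2 ∧ s ∈ Set.Ioo a b) := by
  have hθ'at : ContinuousAt θ' p := hθ'c.continuousAt (Ioo_mem_nhds hp.1 hp.2)
  have hθat : ContinuousAt θ p := (hθ p hp).continuousAt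
  have hG : ContinuousAt (fun s => z s + θ' s * Real.cos (θ s)) p :=
    ((hz' p hp).continuousAt).add (hθ'at.mul (Real.continuous_cos.continuousAt.comp hθat))
  have hGp : 0 < z p + θ' p * Real.cos (θ p) := by rw [h0, hz1]; norm_num
  have e1 : ∀ᶠ s in 𝓝 p, 0 < z s + θ' s * Real.cos (θ s) := hG.eventually (eventually_gt_nhds hGp)
  have habs : ContinuousAt (fun s => |θ s - θ p|) p := (hθat.sub continuousAt_const).abs
  have habsp : |θ p - θ p| < π / 2 := by
    simp [sub_self]
    positivity
  have e2 : ∀ᶠ s in 𝓝 p, |θ s - θ p| < π / 2 := habs.eventually (eventually_lt_nhds habsp)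
  have e3 : ∀ᶠ s in 𝓝 p, s ∈ Set.Ioo a b := Ioo_mem_nhds hp.1 hp.2
  have hev := (e1.and (e2.and e3))
  rw [Metric.eventually_nhds_iff] at hev
  obtain ⟨ε, hε, hball⟩ := hev
  refine ⟨ε / 2, by positivity, fun s hs => ?_⟩
  have : dist s p < ε := by rw [Real.dist_eq]; linarith
  exact hball this

private lemma no_pm_aux (a b : ℝ) (θ z θ' : ℝ → ℝ)
    (hzpos : ∀ t ∈ Set.Ioo a b, 0 < z t)
    (hθ : ∀ t ∈ Set.Ioo a b, HasDerivAt θ (θ' t) t)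
    (hθ'c : ContinuousOn θ' (Set.Ioo a b))
    (hz' : ∀ t ∈ Set.Ioo a b, HasDerivAt z (Real.sin (θ t)) t)
    (heq : ∀ t ∈ Set.Ioo a b, (θ' t) ^ 2 + (Real.cos (θ t)) ^ 2 / (z t) ^ 2 = 1)
    (t₁ t₂ : ℝ) (h1m : t₁ ∈ Set.Ioo a b) (h2m : t₂ ∈ Set.Ioo a b)
    (h12 : t₁ < t₂) (h1 : 0 < θ' t₁) (h2 : θ' t₂ < 0) : False := by
  have hsub : Icc t₁ t₂ ⊆ Ioo a b := fun s hs =>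
    ⟨lt_of_lt_of_le h1m.1 hs.1, lt_of_le_of_lt hs.2 h2m.2⟩
  have hF0 : ∀ t ∈ Ioo a b, z t ^ 2 - Real.cos (θ t) ^ 2 = (z t * θ' t) ^ 2 := by
    intro t ht
    have hz0 := (hzpos t ht).ne'
    have h := heq t ht
    field_simp at h
    nlinarith [h]
  have hFnonneg : ∀ t ∈ Ioo a b, 0 ≤ z t ^ 2 - Real.cos (θ t) ^ 2 := by
    intro t ht; rw [hF0 t ht]; positivity
  have hFd : ∀ t ∈ Ioo a b, HasDerivAt (fun t => z t ^ 2 - Real.cos (θ t) ^ 2)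
      (2 * Real.sin (θ t) * (z t + θ' t * Real.cos (θ t))) t := by
    intro t ht
    have hcos : HasDerivAt (fun s => Real.cos (θ s)) (-Real.sin (θ t) * θ' t) t :=
      (Real.hasDerivAt_cos (θ t)).comp t (hθ t ht)
    have h := ((hz' t ht).pow 2).sub (hcos.pow 2)
    refine h.congr_deriv ?_
    push_cast
    ring
  have hwct : ∀ t ∈ Ioo a b, ContinuousAt θ' t := fun t ht =>
    hθ'c.continuousAt (Ioo_mem_nhds ht.1 ht.2)
  have hzero : ∀ u ∈ Ioo a b, θ' u = 0 → Real.sin (θ u) = 0 ∧ z u = 1 := by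
    intro u hu hw
    have hFu : z u ^ 2 - Real.cos (θ u) ^ 2 = 0 := by rw [hF0 u hu, hw]; ring
    have hmin : IsLocalMin (fun t => z t ^ 2 - Real.cos (θ t) ^ 2) u := by
      filter_upwards [Ioo_mem_nhds hu.1 hu.2] with s hs
      simp only [hFu]
      exact hFnonneg s hs
    have h0 := hmin.hasDerivAt_eq_zero (hFd u hu)
    rw [hw] at h0
    have hzu := hzpos u hu
    have hsin : Real.sin (θ u) = 0 := by
      have hh : Real.sin (θ u) * z u = 0 := by nlinarith [h0]
      rcases mul_eq_zero.mp hh with h | h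
      · exact h
      · exact absurd h hzu.ne'
    refine ⟨hsin, ?_⟩
    have hcos2 : Real.cos (θ u) ^ 2 = 1 := by
      nlinarith [Real.sin_sq_add_cos_sq (θ u)]
    have h := heq u hu
    rw [hw] at h
    have hz0 := hzu.ne'
    field_simp at h
    have hz2 : z u ^ 2 = 1 := by nlinarith [h]
    have hfac : (z u - 1) * (z u + 1) = 0 := by linear_combination hz2
    rcases mul_eq_zero.mp hfac with h' | h'
    · linarith
    · linarith
  -- the set where θ' is nonnegative from the start
  set A : Set ℝ := {t | t ∈ Icc t₁ t₂ ∧ ∀ s ∈ Icc t₁ t, 0 ≤ θ' s} with hAdef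
  have hA1 : t₁ ∈ A := by
    refine ⟨⟨le_refl _, h12.le⟩, fun s hs => ?_⟩
    have : s = t₁ := le_antisymm hs.2 hs.1
    rw [this]; exact h1.le
  have hAbdd : BddAbove A := ⟨t₂, fun t ht => ht.1.2⟩
  set c : ℝ := sSup A with hcdef
  have hct₁ : t₁ ≤ c := le_csSup hAbdd hA1
  have hct₂ : c ≤ t₂ := csSup_le ⟨t₁, hA1⟩ fun t ht => ht.1.2
  have hcmem : c ∈ Ioo a b := hsub ⟨hct₁, hct₂⟩
  have hwlt : ∀ s ∈ Ico t₁ c, 0 ≤ θ' s := by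
    intro s hs
    obtain ⟨t, htA, hst⟩ := exists_lt_of_lt_csSup ⟨t₁, hA1⟩ hs.2
    exact htA.2 s ⟨hs.1, hst.le⟩
  have hwA : ∀ s ∈ Icc t₁ c, 0 ≤ θ' s := by
    intro s hs
    rcases lt_or_eq_of_le hs.2 with h | h
    · exact hwlt s ⟨hs.1, h⟩
    · rw [h]
      rcases eq_or_lt_of_le hct₁ with h' | h'
      · rw [← h']; exact h1.le
      · have htd : Tendsto θ' (𝓝[<] c) (𝓝 (θ' c)) :=
          ((hwct c hcmem).continuousWithinAt (s := Iio c))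
        refine ge_of_tendsto htd ?_
        filter_upwards [Ioo_mem_nhdsLT_of_mem (⟨h', le_refl c⟩ : c ∈ Ioc t₁ c)] with x hx
        exact hwlt x ⟨hx.1.le, hx.2⟩
  have hclt₂ : c < t₂ := by
    rcases lt_or_eq_of_le hct₂ with h | h
    · exact h
    · exfalso; have := hwA c ⟨hct₁, le_refl c⟩; rw [h] at this; linarith
  have hwc0 : θ' c = 0 := by
    rcases lt_or_eq_of_le (hwA c ⟨hct₁, le_refl c⟩) with h | h
    swap
    · exact h.symm
    exfalso
    have hev : ∀ᶠ s in 𝓝 c, 0 < θ' s := (hwct c hcmem).eventually (eventually_gt_nhds h)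
    obtain ⟨l, u, hlu, hsubset⟩ := mem_nhds_iff_exists_Ioo_subset.mp hev
    set d : ℝ := min ((c + u) / 2) t₂ with hddef
    have hcd : c < d := lt_min (by linarith [hlu.2]) hclt₂
    have hdA : d ∈ A := by
      refine ⟨⟨by linarith, min_le_right _ _⟩, fun s hs => ?_⟩
      rcases le_or_gt s c with h' | h'
      · exact hwA s ⟨hs.1, h'⟩
      · have hsu : s < u := by
          have : s ≤ (c + u) / 2 := le_trans hs.2 (min_le_left _ _)
          linarith [hlu.2]
        exact (hsubset ⟨lt_trans hlu.1 h', hsu⟩).le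
    have := le_csSup hAbdd hdA
    linarith
  obtain ⟨hsinc, hzc⟩ := hzero c hcmem hwc0
  -- enough negativity just to the right of c
  have hright : ∀ δ, 0 < δ → ∃ s, c < s ∧ s ≤ c + δ ∧ s ≤ t₂ ∧ θ' s < 0 := by
    intro δ hδ
    by_contra hcon
    push_neg at hcon
    set m : ℝ := min (c + δ) t₂ with hmdef
    have hcm : c < m := lt_min (by linarith) hclt₂
    have hmA : m ∈ A := by
      refine ⟨⟨by linarith, min_le_right _ _⟩, fun s hs => ?_⟩
      rcases le_or_gt s c with h' | h'
      · exact hwA s ⟨hs.1, h'⟩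
      · exact hcon s h' (le_trans hs.2 (min_le_left _ _)) (le_trans hs.2 (min_le_right _ _))
    have := le_csSup hAbdd hmA
    linarith
  rcases Real.sin_eq_zero_iff_cos_eq.mp hsinc with hcosc | hcosc
  · -- cos (θ c) = 1 : contradiction to the right of c
    obtain ⟨η, hη, hwinc⟩ := window_aux a b θ z θ' hθ hθ'c hz' c hcmem hwc0 hzc
    obtain ⟨tstar, hct, htη, htt₂, htneg⟩ := hright η hη
    have hIcc : ∀ s ∈ Icc c tstar,
        0 < z s + θ' s * Real.cos (θ s) ∧ |θ s - θ c| < π / 2 ∧ s ∈ Ioo a b := by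
      intro s hs
      refine hwinc s ?_
      rw [abs_of_nonneg (by linarith [hs.1])]
      linarith [hs.2]
    have htmem : tstar ∈ Set.Ioo a b := (hIcc tstar ⟨hct.le, le_refl _⟩).2.2
    have hmax : ∀ s ∈ Icc c tstar, θ s ≤ θ c := by
      by_contra hcon
      push_neg at hcon
      obtain ⟨s₀, hs₀, hs₀'⟩ := hcon
      obtain ⟨u, huI, humax⟩ := isCompact_Icc.exists_isMaxOn (⟨c, left_mem_Icc.mpr hct.le⟩ :
        (Icc c tstar).Nonempty)
        (fun x hx => ((hθ x (hIcc x hx).2.2).continuousAt).continuousWithinAt)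
      have hθu : θ c < θ u := lt_of_lt_of_le hs₀' (humax hs₀)
      have hu_ne_c : u ≠ c := fun h => by rw [h] at hθu; exact lt_irrefl _ hθu
      have hu_ne_t : u ≠ tstar := by
        obtain ⟨s, hsmem, hslt⟩ := slope_left_aux (hθ tstar htmem) htneg hct
        intro h
        have hsu := humax (⟨hsmem.1.le, hsmem.2.le⟩ : s ∈ Icc c tstar)
        rw [h] at hsu
        simp only [Set.mem_setOf_eq] at hsu
        linarith [hsu, hslt]
      have huo : u ∈ Ioo c tstar :=
        ⟨lt_of_le_of_ne huI.1 (Ne.symm hu_ne_c), lt_of_le_of_ne huI.2 hu_ne_t⟩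
      have hul : IsLocalMax θ u := humax.isLocalMax (Icc_mem_nhds huo.1 huo.2)
      have hwu : θ' u = 0 := hul.hasDerivAt_eq_zero (hθ u (hIcc u huI).2.2)
      have hzu := hzero u (hIcc u huI).2.2 hwu
      have habs := abs_lt.mp (hIcc u huI).2.1
      exact no_two_zeros_aux hsinc hzu.1 hθu (by linarith [Real.pi_pos])
    have hF'le : ∀ s ∈ Ioo c tstar,
        2 * Real.sin (θ s) * (z s + θ' s * Real.cos (θ s)) ≤ 0 := by
      intro s hs
      have hwin := hIcc s (Ioo_subset_Icc_self hs)
      have hθs := hmax s (Ioo_subset_Icc_self hs)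
      have habs := abs_lt.mp hwin.2.1
      have hsin : Real.sin (θ s) = Real.cos (θ c) * Real.sin (θ s - θ c) := by
        have h := Real.sin_add (θ c) (θ s - θ c)
        have h2 : θ c + (θ s - θ c) = θ s := by ring
        rw [h2] at h
        rw [h, hsinc]; ring
      have hsinδ : Real.sin (θ s - θ c) ≤ 0 := by
        have h := Real.sin_nonneg_of_nonneg_of_le_pi (x := -(θ s - θ c)) (by linarith)
          (by linarith [Real.pi_pos])
        rw [Real.sin_neg] at h
        linarith
      rw [hcosc, one_mul] at hsin
      nlinarith [hwin.1]
    have hcont : ContinuousOn (fun t => z t ^ 2 - Real.cos (θ t) ^ 2) (Icc c tstar) :=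
      fun x hx => ((hFd x (hIcc x hx).2.2).continuousAt).continuousWithinAt
    obtain ⟨ξ, hξ, hslope⟩ := exists_hasDerivAt_eq_slope
      (fun t => z t ^ 2 - Real.cos (θ t) ^ 2)
      (fun t => 2 * Real.sin (θ t) * (z t + θ' t * Real.cos (θ t))) hct hcont
      (fun x hx => hFd x (hIcc x (Ioo_subset_Icc_self hx)).2.2)
    have hFc : z c ^ 2 - Real.cos (θ c) ^ 2 = 0 := by rw [hF0 c hcmem, hwc0]; ring
    have hsξ := hF'le ξ hξ
    rw [hslope, hFc, sub_zero] at hsξ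
    have hq : z tstar ^ 2 - Real.cos (θ tstar) ^ 2 ≤ 0 := by
      rcases div_nonpos_iff.mp hsξ with ⟨hn, hd⟩ | ⟨hn, hd⟩
      · linarith
      · exact hn
    have hpos : 0 < z tstar ^ 2 - Real.cos (θ tstar) ^ 2 := by
      rw [hF0 tstar htmem]
      have : z tstar * θ' tstar ≠ 0 := mul_ne_zero (hzpos tstar htmem).ne' (ne_of_lt htneg)
      positivity
    linarith
  · -- cos (θ c) = -1 : contradiction to the left of a related zero r
    -- construct r
    set B : Set ℝ := {t | t ∈ Set.Icc t₁ c ∧ ∀ s ∈ Set.Icc t c, θ' s = 0} with hBdef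
    have hcB : c ∈ B := by
      refine ⟨⟨hct₁, le_refl _⟩, fun s hs => ?_⟩
      have : s = c := le_antisymm hs.2 hs.1
      rw [this]; exact hwc0
    have hBbdd : BddBelow B := ⟨t₁, fun t ht => ht.1.1⟩
    set r : ℝ := sInf B with hrdef
    have hrt₁ : t₁ ≤ r := le_csInf ⟨c, hcB⟩ fun t ht => ht.1.1
    have hrc : r ≤ c := csInf_le hBbdd hcB
    have hrmem : r ∈ Set.Ioo a b := hsub ⟨hrt₁, le_trans hrc hct₂⟩
    have hwB : ∀ s ∈ Set.Ioc r c, θ' s = 0 := by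
      intro s hs
      obtain ⟨t, htB, hts⟩ := exists_lt_of_csInf_lt ⟨c, hcB⟩ hs.1
      exact htB.2 s ⟨hts.le, hs.2⟩
    have hwr : θ' r = 0 := by
      rcases eq_or_lt_of_le hrc with h | h
      · rw [h]; exact hwc0
      · have htd : Tendsto θ' (𝓝[>] r) (𝓝 (θ' r)) :=
          (hwct r hrmem).continuousWithinAt (s := Set.Ioi r)
        have ht0 : Tendsto θ' (𝓝[>] r) (𝓝 0) := by
          refine Tendsto.congr' ?_ tendsto_const_nhds
          filter_upwards [Ioo_mem_nhdsGT_of_mem (⟨le_refl r, h⟩ : r ∈ Set.Ico r c)] with x hx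
          exact (hwB x ⟨hx.1, hx.2.le⟩).symm
        exact tendsto_nhds_unique htd ht0
    have hθrc : θ r = θ c := by
      rcases eq_or_lt_of_le hrc with h | h
      · rw [h]
      · have hcont : ContinuousOn θ (Set.Icc r c) := fun x hx =>
          ((hθ x (hsub ⟨le_trans hrt₁ hx.1, le_trans hx.2 hct₂⟩)).continuousAt).continuousWithinAt
        obtain ⟨ξ, hξ, hslope⟩ := exists_hasDerivAt_eq_slope θ θ' h hcont
          (fun x hx => hθ x (hsub ⟨le_trans hrt₁ hx.1.le, le_trans hx.2.le hct₂⟩))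
        have hξ0 : θ' ξ = 0 := hwB ξ ⟨hξ.1, hξ.2.le⟩
        rw [hξ0] at hslope
        have hne : c - r ≠ 0 := by intro hh; linarith
        field_simp at hslope
        linarith [hslope]
    obtain ⟨hsinr, hzr⟩ := hzero r hrmem hwr
    have hcosr : Real.cos (θ r) = -1 := by rw [hθrc]; exact hcosc
    have ht₁r : t₁ < r := by
      rcases eq_or_lt_of_le hrt₁ with h | h
      · exfalso; rw [← h] at hwr; linarith
      · exact h
    have hleft : ∀ δ, 0 < δ → ∃ s, max t₁ (r - δ) ≤ s ∧ s < r ∧ 0 < θ' s := by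
      intro δ hδ
      by_contra hcon
      push_neg at hcon
      have hm : max t₁ (r - δ) < r := max_lt ht₁r (by linarith)
      have hmB : max t₁ (r - δ) ∈ B := by
        refine ⟨⟨le_max_left _ _, le_trans hm.le hrc⟩, fun s hs => ?_⟩
        rcases lt_or_ge s r with h' | h'
        · exact le_antisymm (hcon s hs.1 h') (hwA s ⟨le_trans (le_max_left _ _) hs.1, hs.2⟩)
        · rcases eq_or_lt_of_le h' with h'' | h''
          · rw [← h'']; exact hwr
          · exact hwB s ⟨h'', hs.2⟩
      have := csInf_le hBbdd hmB
      linarith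
    -- endgame on the left of r
    obtain ⟨η, hη, hwinr⟩ := window_aux a b θ z θ' hθ hθ'c hz' r hrmem hwr hzr
    obtain ⟨tstar, htmax, htr, htpos⟩ := hleft η hη
    have hIcc : ∀ s ∈ Set.Icc tstar r,
        0 < z s + θ' s * Real.cos (θ s) ∧ |θ s - θ r| < π / 2 ∧ s ∈ Set.Ioo a b := by
      intro s hs
      refine hwinr s ?_
      rw [abs_of_nonpos (by linarith [hs.2])]
      have : r - η ≤ tstar := le_trans (le_max_right _ _) htmax
      linarith [hs.1]
    have htmem : tstar ∈ Set.Ioo a b := (hIcc tstar ⟨le_refl _, htr.le⟩).2.2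
    have hmax : ∀ s ∈ Icc tstar r, θ s ≤ θ r := by
      by_contra hcon
      push_neg at hcon
      obtain ⟨s₀, hs₀, hs₀'⟩ := hcon
      obtain ⟨u, huI, humax⟩ := isCompact_Icc.exists_isMaxOn (⟨r, right_mem_Icc.mpr htr.le⟩ :
        (Icc tstar r).Nonempty)
        (fun x hx => ((hθ x (hIcc x hx).2.2).continuousAt).continuousWithinAt)
      have hθu : θ r < θ u := lt_of_lt_of_le hs₀' (humax hs₀)
      have hu_ne_r : u ≠ r := fun h => by rw [h] at hθu; exact lt_irrefl _ hθu
      have hu_ne_t : u ≠ tstar := by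
        obtain ⟨s, hsmem, hslt⟩ := slope_right_aux (hθ tstar htmem) htpos htr
        intro h
        have hsu := humax (⟨hsmem.1.le, hsmem.2.le⟩ : s ∈ Icc tstar r)
        rw [h] at hsu
        simp only [Set.mem_setOf_eq] at hsu
        linarith [hsu, hslt]
      have huo : u ∈ Ioo tstar r :=
        ⟨lt_of_le_of_ne huI.1 (Ne.symm hu_ne_t), lt_of_le_of_ne huI.2 hu_ne_r⟩
      have hul : IsLocalMax θ u := humax.isLocalMax (Icc_mem_nhds huo.1 huo.2)
      have hwu : θ' u = 0 := hul.hasDerivAt_eq_zero (hθ u (hIcc u huI).2.2)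
      have hzu := hzero u (hIcc u huI).2.2 hwu
      have habs := abs_lt.mp (hIcc u huI).2.1
      exact no_two_zeros_aux hsinr hzu.1 hθu (by linarith [Real.pi_pos])
    have hF'ge : ∀ s ∈ Ioo tstar r,
        0 ≤ 2 * Real.sin (θ s) * (z s + θ' s * Real.cos (θ s)) := by
      intro s hs
      have hwin := hIcc s (Ioo_subset_Icc_self hs)
      have hθs := hmax s (Ioo_subset_Icc_self hs)
      have habs := abs_lt.mp hwin.2.1
      have hsin : Real.sin (θ s) = Real.cos (θ r) * Real.sin (θ s - θ r) := by
        have h := Real.sin_add (θ r) (θ s - θ r)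
        have h2 : θ r + (θ s - θ r) = θ s := by ring
        rw [h2] at h
        rw [h, hsinr]; ring
      have hsinδ : Real.sin (θ s - θ r) ≤ 0 := by
        have h := Real.sin_nonneg_of_nonneg_of_le_pi (x := -(θ s - θ r)) (by linarith)
          (by linarith [Real.pi_pos])
        rw [Real.sin_neg] at h
        linarith
      rw [hcosr] at hsin
      nlinarith [hwin.1]
    have hcont : ContinuousOn (fun t => z t ^ 2 - Real.cos (θ t) ^ 2) (Icc tstar r) :=
      fun x hx => ((hFd x (hIcc x hx).2.2).continuousAt).continuousWithinAt
    obtain ⟨ξ, hξ, hslope⟩ := exists_hasDerivAt_eq_slope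
      (fun t => z t ^ 2 - Real.cos (θ t) ^ 2)
      (fun t => 2 * Real.sin (θ t) * (z t + θ' t * Real.cos (θ t))) htr hcont
      (fun x hx => hFd x (hIcc x (Ioo_subset_Icc_self hx)).2.2)
    have hFr : z r ^ 2 - Real.cos (θ r) ^ 2 = 0 := by rw [hF0 r hrmem, hwr]; ring
    have hsξ := hF'ge ξ hξ
    rw [hslope, hFr, zero_sub] at hsξ
    have hq2 : z tstar ^ 2 - Real.cos (θ tstar) ^ 2 ≤ 0 := by
      rcases div_nonneg_iff.mp hsξ with ⟨hn, hd⟩ | ⟨hn, hd⟩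
      · linarith
      · linarith
    have hpos : 0 < z tstar ^ 2 - Real.cos (θ tstar) ^ 2 := by
      rw [hF0 tstar htmem]
      have : z tstar * θ' tstar ≠ 0 := mul_ne_zero (hzpos tstar htmem).ne' (ne_of_gt htpos)
      positivity
    linarith

private lemma no_mp_aux (a b : ℝ) (θ z θ' : ℝ → ℝ)
    (hzpos : ∀ t ∈ Set.Ioo a b, 0 < z t)
    (hθ : ∀ t ∈ Set.Ioo a b, HasDerivAt θ (θ' t) t)
    (hθ'c : ContinuousOn θ' (Set.Ioo a b))
    (hz' : ∀ t ∈ Set.Ioo a b, HasDerivAt z (Real.sin (θ t)) t)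
    (heq : ∀ t ∈ Set.Ioo a b, (θ' t) ^ 2 + (Real.cos (θ t)) ^ 2 / (z t) ^ 2 = 1)
    (t₁ t₂ : ℝ) (h1m : t₁ ∈ Set.Ioo a b) (h2m : t₂ ∈ Set.Ioo a b)
    (h12 : t₁ < t₂) (h1 : θ' t₁ < 0) (h2 : 0 < θ' t₂) : False := by
  have hmem : ∀ t : ℝ, t ∈ Set.Ioo (-b) (-a) → -t ∈ Set.Ioo a b := by
    intro t ht
    exact ⟨by linarith [ht.2], by linarith [ht.1]⟩
  refine no_pm_aux (-b) (-a) (fun t => -θ (-t)) (fun t => z (-t)) (fun t => θ' (-t))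
    (fun t ht => hzpos (-t) (hmem t ht)) ?_ ?_ ?_ ?_ (-t₂) (-t₁)
    ⟨by linarith [h2m.2], by linarith [h2m.1]⟩ ⟨by linarith [h1m.2], by linarith [h1m.1]⟩
    (by linarith) (by simpa using h2) (by simpa using h1)
  · intro t ht
    have h := (hθ (-t) (hmem t ht)).comp t (hasDerivAt_neg t)
    have h2 := h.neg
    refine h2.congr_deriv ?_
    ring
  · exact ContinuousOn.comp hθ'c (continuous_neg.continuousOn) (fun t ht => hmem t ht)
  · intro t ht
    have h := (hz' (-t) (hmem t ht)).comp t (hasDerivAt_neg t)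
    refine h.congr_deriv ?_
    rw [Real.sin_neg]
    ring
  · intro t ht
    have h := heq (-t) (hmem t ht)
    simpa [Real.cos_neg] using h

theorem theta_monotone (a b : ℝ) (θ z θ' : ℝ → ℝ)
    (hzpos : ∀ t ∈ Set.Ioo a b, 0 < z t)
    (hθ : ∀ t ∈ Set.Ioo a b, HasDerivAt θ (θ' t) t)
    (hθ'c : ContinuousOn θ' (Set.Ioo a b))
    (hz' : ∀ t ∈ Set.Ioo a b, HasDerivAt z (Real.sin (θ t)) t)
    (heq : ∀ t ∈ Set.Ioo a b, (θ' t) ^ 2 + (Real.cos (θ t)) ^ 2 / (z t) ^ 2 = 1) :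
    MonotoneOn θ (Set.Ioo a b) ∨ AntitoneOn θ (Set.Ioo a b) := by
  have hcont : ContinuousOn θ (Set.Ioo a b) := fun x hx =>
    (hθ x hx).continuousAt.continuousWithinAt
  have hdiff : DifferentiableOn ℝ θ (interior (Set.Ioo a b)) := by
    rw [interior_Ioo]
    exact fun x hx => (hθ x hx).differentiableAt.differentiableWithinAt
  by_cases hall : ∀ t ∈ Set.Ioo a b, 0 ≤ θ' t
  · left
    refine monotoneOn_of_deriv_nonneg (convex_Ioo a b) hcont hdiff ?_
    intro x hx
    rw [interior_Ioo] at hx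
    rw [(hθ x hx).deriv]
    exact hall x hx
  · push_neg at hall
    obtain ⟨q, hq, hqneg⟩ := hall
    have hnonpos : ∀ t ∈ Set.Ioo a b, θ' t ≤ 0 := by
      intro p hp
      by_contra h
      push_neg at h
      rcases lt_trichotomy p q with h' | h' | h'
      · exact no_pm_aux a b θ z θ' hzpos hθ hθ'c hz' heq p q hp hq h' h hqneg
      · rw [h'] at h; linarith
      · exact no_mp_aux a b θ z θ' hzpos hθ hθ'c hz' heq q p hq hp h' hqneg h
    right
    refine antitoneOn_of_deriv_nonpos (convex_Ioo a b) hcont hdiff ?_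
    intro x hx
    rw [interior_Ioo] at hx
    rw [(hθ x hx).deriv]
    exact hnonpos x hx
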